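/- Fix q ∈ ℝ^d with q ≠ 0, η > 0, x ∈ ℝ^d, and a convex, three times differentiable function ℓ̂ : ℝ → ℝ. Let s : [0,1] → ℝ be differentiable with s(0) = 0 and s'(h) = η ℓ̂'(⟨q, x − s(h) q⟩) for all h ∈ [0,1], and assume s' is continuous on [0,1]. Write p(h) = ⟨q, x − s(h) q⟩, g(h) = ℓ̂'(p(h)) q, g = g(0), ℓ(w) = ℓ̂(⟨q,w⟩), θ = x/η, and H(z) = (η/2)‖θ − z‖² + ℓ*(z), where ℓ*(z) = sup_w (⟨z,w⟩ − ℓ(w)). Suppose that either (i) for all h ∈ [0,1], ℓ̂'(p(h)) ≥ 0 and ℓ̂'''(p(h)) ≥ 0, or (ii) for all h ∈ [0,1], ℓ̂'(p(h)) ≤ 0 and ℓ̂'''(p(h)) ≤ 0. Then the vector z = ∫₀¹ g(h) dh = (1/η) s(1) q satisfies H(z) ≤ H(g). -/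

import Mathlib

open scoped RealInnerProductSpace

lemma deriv_nonneg_of_monotone' {g : ℝ → ℝ} (hm : Monotone g) {g' x : ℝ}
    (h : HasDerivAt g g' x) : 0 ≤ g' := by
  refine ge_of_tendsto (hasDerivAt_iff_tendsto_slope.mp h)
    (Filter.Eventually.of_forall fun y => ?_)
  rcases le_total x y with hxy | hxy
  · rw [slope_def_field]
    exact div_nonneg (sub_nonneg.2 (hm hxy)) (sub_nonneg.2 hxy)
  · rw [slope_comm, slope_def_field]
    exact div_nonneg (sub_nonneg.2 (hm hxy)) (sub_nonneg.2 hxy)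

lemma convex_tangent_le' {l : ℝ → ℝ} (hconv : ConvexOn ℝ Set.univ l)
    (hd1 : Differentiable ℝ l) (y t : ℝ) :
    l y + deriv l y * (t - y) ≤ l t := by
  rcases lt_trichotomy y t with h | h | h
  · have hs := hconv.deriv_le_slope (Set.mem_univ y) (Set.mem_univ t) h (hd1 y)
    rw [slope_def_field, le_div_iff₀ (sub_pos.2 h)] at hs
    linarith
  · subst h; simp
  · have hs := hconv.slope_le_deriv (Set.mem_univ t) (Set.mem_univ y) h (hd1 y)
    rw [slope_def_field, div_le_iff₀ (sub_pos.2 h)] at hs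
    have h2 : deriv l y * (t - y) = -(deriv l y * (y - t)) := by ring
    linarith

/-- IWA updates satisfy `H(z) ≤ H(g)` (Theorem 3.2 / `th:iwa`): under the sign
conditions on `ℓ̂'` and `ℓ̂'''` along the gradient flow, the IWA dual vector
`z = ∫₀¹ g(h) dh = (1/η) s(1) q` satisfies `H(z) ≤ H(g)`, where
`H(z) = ψ*(θ - z) + ℓ*(z)` with `ψ*(θ) = (η/2)‖θ‖²` and `θ = x/η`. -/
theorem iwa_satisfies_H_le
    (d : ℕ) (q : EuclideanSpace ℝ (Fin d)) (hq : q ≠ 0) (η : ℝ) (hη : 0 < η)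
    (x : EuclideanSpace ℝ (Fin d))
    (l : ℝ → ℝ) (hconv : ConvexOn ℝ Set.univ l)
    (hd1 : Differentiable ℝ l) (hd2 : Differentiable ℝ (deriv l))
    (hd3 : Differentiable ℝ (deriv (deriv l)))
    (s : ℝ → ℝ) (hs0 : s 0 = 0)
    (p : ℝ → ℝ) (hp : ∀ h, p h = ⟪q, x - s h • q⟫)
    (hsODE : ∀ h ∈ Set.Icc (0 : ℝ) 1, HasDerivAt s (η * deriv l (p h)) h)
    -- s' is continuous on [0,1]
    (hs'cont : ContinuousOn (fun h => η * deriv l (p h)) (Set.Icc (0 : ℝ) 1))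
    -- g(h) = ℓ̂'(p(h)) q
    (G : ℝ → EuclideanSpace ℝ (Fin d)) (hG : ∀ h, G h = deriv l (p h) • q)
    -- ℓ*(z) for ℓ(w) = ℓ̂(⟨q, w⟩)
    (lstar : EuclideanSpace ℝ (Fin d) → EReal)
    (hlstar : ∀ zz, lstar zz = ⨆ w, ((⟪zz, w⟫ - l ⟪q, w⟫ : ℝ) : EReal))
    -- H(z) = (η/2)‖θ - z‖² + ℓ*(z), θ = x/η
    (H : EuclideanSpace ℝ (Fin d) → EReal)
    (hH : ∀ zz, H zz = ((η / 2 * ‖η⁻¹ • x - zz‖ ^ 2 : ℝ) : EReal) + lstar zz)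
    -- sign conditions: (i) or (ii)
    (hsign : (∀ h ∈ Set.Icc (0 : ℝ) 1,
        0 ≤ deriv l (p h) ∧ 0 ≤ deriv (deriv (deriv l)) (p h))
      ∨ (∀ h ∈ Set.Icc (0 : ℝ) 1,
        deriv l (p h) ≤ 0 ∧ deriv (deriv (deriv l)) (p h) ≤ 0)) :
    (∫ h in (0 : ℝ)..1, G h) = (η⁻¹ * s 1) • q
      ∧ H ((η⁻¹ * s 1) • q) ≤ H (G 0) := by
  have hη' : η ≠ 0 := hη.ne'
  set Q : ℝ := ‖q‖ ^ 2 with hQdef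
  have hQpos : 0 < Q := pow_pos (norm_pos_iff.2 hq) 2
  set b : ℝ := ⟪q, x⟫ with hbdef
  set c : ℝ → ℝ := fun h => deriv l (p h) with hcdef
  set A : ℝ := η⁻¹ * s 1 with hAdef
  -- p as an affine function of s
  have hpf : ∀ h, p h = b - s h * Q := by
    intro h
    rw [hp h, inner_sub_right, real_inner_smul_right, real_inner_self_eq_norm_sq]
  -- continuity of c on [0,1]
  have hccont : ContinuousOn c (Set.Icc (0 : ℝ) 1) := by
    have h := hs'cont.const_smul η⁻¹
    simpa [Pi.smul_def, smul_eq_mul, inv_mul_cancel_left₀ hη'] using h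
  -- c is integrable
  have hcint : IntervalIntegrable c MeasureTheory.volume 0 1 := by
    apply ContinuousOn.intervalIntegrable
    rwa [Set.uIcc_of_le zero_le_one]
  -- FTC
  have hftc : (∫ h in (0 : ℝ)..1, η * c h) = s 1 := by
    have := intervalIntegral.integral_eq_sub_of_hasDerivAt (f := s)
      (f' := fun h => η * c h) (a := 0) (b := 1)
      (fun t ht => hsODE t (by rwa [Set.uIcc_of_le zero_le_one] at ht))
      (by apply ContinuousOn.intervalIntegrable; rwa [Set.uIcc_of_le zero_le_one])
    rw [this, hs0, sub_zero]
  have hcA : (∫ h in (0 : ℝ)..1, c h) = A := by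
    rw [intervalIntegral.integral_const_mul] at hftc
    rw [hAdef, ← hftc]
    field_simp
  -- first conjunct
  have hG1 : (∫ h in (0 : ℝ)..1, G h) = A • q := by
    have h1 : (∫ h in (0 : ℝ)..1, G h) = ∫ h in (0 : ℝ)..1, c h • q := by
      congr 1; funext h; rw [hG h]
    rw [h1, intervalIntegral.integral_smul_const, hcA]
  refine ⟨hG1, ?_⟩
  -- derivative of p
  have hpd : ∀ h ∈ Set.Icc (0 : ℝ) 1, HasDerivAt p (-(η * c h * Q)) h := by
    intro h hh
    rw [show p = fun h => b - s h * Q from funext hpf]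
    exact ((hsODE h hh).mul_const Q).const_sub b
  -- derivative of c
  have hcd : ∀ h ∈ Set.Icc (0 : ℝ) 1,
      HasDerivAt c (deriv (deriv l) (p h) * -(η * c h * Q)) h := by
    intro h hh
    exact ((hd2 (p h)).hasDerivAt).comp h (hpd h hh)
  -- second derivative of l is nonneg
  have hl2 : ∀ t, 0 ≤ deriv (deriv l) t := by
    intro t
    have hmono : Monotone (deriv l) :=
      monotoneOn_univ.mp (hconv.monotoneOn_deriv (fun y _ => hd1 y))
    exact deriv_nonneg_of_monotone' hmono ((hd2 t).hasDerivAt)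
  -- continuity of s on [0,1]
  have hscont : ContinuousOn s (Set.Icc (0 : ℝ) 1) :=
    fun h hh => (hsODE h hh).continuousAt.continuousWithinAt
  -- key: there is h* in [0,1] with c h* = A and the sign product inequality
  have key : ∃ hstar ∈ Set.Icc (0 : ℝ) 1, c hstar = A ∧
      (c 0 - A) * (s hstar - η / 2 * (c 0 + A)) ≤ 0 := by
    rcases hsign with hpos | hneg
    · -- case (i): c ≥ 0, c antitone, s monotone
      have hcanti : AntitoneOn c (Set.Icc (0 : ℝ) 1) := by
        apply antitoneOn_of_deriv_nonpos (convex_Icc 0 1) hccont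
        · intro h hh
          exact ((hcd h (interior_subset hh)).differentiableAt).differentiableWithinAt
        · intro h hh
          rw [(hcd h (interior_subset hh)).deriv]
          have hc0 : 0 ≤ c h := (hpos h (interior_subset hh)).1
          nlinarith [hl2 (p h), hQpos.le, hη.le,
            mul_nonneg (mul_nonneg (mul_nonneg (hl2 (p h)) hη.le) hc0) hQpos.le]
      have hsmono : MonotoneOn s (Set.Icc (0 : ℝ) 1) := by
        apply monotoneOn_of_deriv_nonneg (convex_Icc 0 1) hscont
        · intro h hh
          exact ((hsODE h (interior_subset hh)).differentiableAt).differentiableWithinAt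
        · intro h hh
          rw [(hsODE h (interior_subset hh)).deriv]
          exact mul_nonneg hη.le (hpos h (interior_subset hh)).1
      have hA_le : A ≤ c 0 := by
        rw [← hcA]
        calc (∫ h in (0:ℝ)..1, c h) ≤ ∫ _ in (0:ℝ)..1, c 0 := by
              apply intervalIntegral.integral_mono_on zero_le_one hcint
                intervalIntegrable_const
              intro h hh
              exact hcanti (Set.left_mem_Icc.2 zero_le_one) hh hh.1
          _ = c 0 := by simp
      have hle_A : c 1 ≤ A := by
        rw [← hcA]
        calc c 1 = ∫ _ in (0:ℝ)..1, c 1 := by simp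
          _ ≤ ∫ h in (0:ℝ)..1, c h := by
              apply intervalIntegral.integral_mono_on zero_le_one
                intervalIntegrable_const hcint
              intro h hh
              exact hcanti hh (Set.right_mem_Icc.2 zero_le_one) hh.2
      obtain ⟨hstar, hmem, hch⟩ := intermediate_value_Icc' zero_le_one hccont ⟨hle_A, hA_le⟩
      refine ⟨hstar, hmem, hch, ?_⟩
      have hs_le : s hstar ≤ s 1 := hsmono hmem (Set.right_mem_Icc.2 zero_le_one) hmem.2
      have hs1 : s 1 = η * A := by rw [hAdef]; field_simp
      have h2 : s hstar - η / 2 * (c 0 + A) ≤ 0 := by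
        nlinarith [mul_nonneg hη.le (sub_nonneg.2 hA_le)]
      exact mul_nonpos_of_nonneg_of_nonpos (sub_nonneg.2 hA_le) h2
    · -- case (ii): c ≤ 0, c monotone, s antitone
      have hcmono : MonotoneOn c (Set.Icc (0 : ℝ) 1) := by
        apply monotoneOn_of_deriv_nonneg (convex_Icc 0 1) hccont
        · intro h hh
          exact ((hcd h (interior_subset hh)).differentiableAt).differentiableWithinAt
        · intro h hh
          rw [(hcd h (interior_subset hh)).deriv]
          have hc0 : c h ≤ 0 := (hneg h (interior_subset hh)).1
          nlinarith [hl2 (p h), hQpos.le, hη.le,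
            mul_nonneg (mul_nonneg (hl2 (p h)) hη.le) hQpos.le]
      have hsanti : AntitoneOn s (Set.Icc (0 : ℝ) 1) := by
        apply antitoneOn_of_deriv_nonpos (convex_Icc 0 1) hscont
        · intro h hh
          exact ((hsODE h (interior_subset hh)).differentiableAt).differentiableWithinAt
        · intro h hh
          rw [(hsODE h (interior_subset hh)).deriv]
          exact mul_nonpos_of_nonneg_of_nonpos hη.le (hneg h (interior_subset hh)).1
      have hA_ge : c 0 ≤ A := by
        rw [← hcA]
        calc c 0 = ∫ _ in (0:ℝ)..1, c 0 := by simp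
          _ ≤ ∫ h in (0:ℝ)..1, c h := by
              apply intervalIntegral.integral_mono_on zero_le_one
                intervalIntegrable_const hcint
              intro h hh
              exact hcmono (Set.left_mem_Icc.2 zero_le_one) hh hh.1
      have hge_A : A ≤ c 1 := by
        rw [← hcA]
        calc (∫ h in (0:ℝ)..1, c h) ≤ ∫ _ in (0:ℝ)..1, c 1 := by
              apply intervalIntegral.integral_mono_on zero_le_one hcint
                intervalIntegrable_const
              intro h hh
              exact hcmono hh (Set.right_mem_Icc.2 zero_le_one) hh.2
          _ = c 1 := by simp
      obtain ⟨hstar, hmem, hch⟩ := intermediate_value_Icc zero_le_one hccont ⟨hA_ge, hge_A⟩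
      refine ⟨hstar, hmem, hch, ?_⟩
      have hs_ge : s 1 ≤ s hstar := hsanti hmem (Set.right_mem_Icc.2 zero_le_one) hmem.2
      have hs1 : s 1 = η * A := by rw [hAdef]; field_simp
      have h2 : 0 ≤ s hstar - η / 2 * (c 0 + A) := by
        nlinarith [mul_nonneg hη.le (sub_nonneg.2 hA_ge)]
      exact mul_nonpos_of_nonpos_of_nonneg (sub_nonpos.2 hA_ge) h2
  obtain ⟨hstar, hmem, hch, hkey⟩ := key
  set pstar : ℝ := p hstar with hpstardef
  -- tangent inequality at pstar: for all t, a * t - l t ≤ a * pstar - l pstar when a = A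
  have hderiv_pstar : deriv l pstar = A := hch
  have hub : ∀ t : ℝ, A * t - l t ≤ A * pstar - l pstar := by
    intro t
    have := convex_tangent_le' hconv hd1 pstar t
    rw [hderiv_pstar] at this
    nlinarith [this]
  -- the maximizing point
  set w0 : EuclideanSpace ℝ (Fin d) := (pstar / Q) • q with hw0def
  have hw0 : ⟪q, w0⟫ = pstar := by
    rw [hw0def, real_inner_smul_right, real_inner_self_eq_norm_sq]
    field_simp
    rfl
  -- value of lstar at A • q
  have hlstarA : lstar (A • q) = ((A * pstar - l pstar : ℝ) : EReal) := by
    rw [hlstar]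
    apply le_antisymm
    · apply iSup_le
      intro w
      rw [EReal.coe_le_coe_iff, real_inner_smul_left]
      exact hub _
    · refine le_trans (le_of_eq ?_) (le_iSup _ w0)
      rw [real_inner_smul_left, hw0]
  -- lower bound on lstar at c 0 • q
  have hlstarG : ((c 0 * pstar - l pstar : ℝ) : EReal) ≤ lstar (c 0 • q) := by
    rw [hlstar]
    refine le_trans (le_of_eq ?_) (le_iSup _ w0)
    rw [real_inner_smul_left, hw0]
  -- norm expansion
  have hexp : ∀ a : ℝ, ‖η⁻¹ • x - a • q‖ ^ 2
      = ‖η⁻¹ • x‖ ^ 2 - 2 * (a * (η⁻¹ * b)) + a ^ 2 * Q := by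
    intro a
    have hnq : ‖a • q‖ ^ 2 = a ^ 2 * ‖q‖ ^ 2 := by
      rw [norm_smul, mul_pow, Real.norm_eq_abs, sq_abs]
    rw [norm_sub_sq_real, real_inner_smul_right, real_inner_smul_left, hnq,
      show (⟪x, q⟫ : ℝ) = b from by rw [hbdef, real_inner_comm], hQdef]
  -- the real inequality
  have hreal : η / 2 * ‖η⁻¹ • x - A • q‖ ^ 2 + (A * pstar - l pstar)
      ≤ η / 2 * ‖η⁻¹ • x - c 0 • q‖ ^ 2 + (c 0 * pstar - l pstar) := by
    rw [hexp A, hexp (c 0)]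
    have hps : pstar = b - s hstar * Q := hpf hstar
    have hdiff : η / 2 * (‖η⁻¹ • x‖ ^ 2 - 2 * (c 0 * (η⁻¹ * b)) + c 0 ^ 2 * Q)
          + (c 0 * pstar - l pstar)
          - (η / 2 * (‖η⁻¹ • x‖ ^ 2 - 2 * (A * (η⁻¹ * b)) + A ^ 2 * Q)
          + (A * pstar - l pstar))
        = -(Q * ((c 0 - A) * (s hstar - η / 2 * (c 0 + A)))) := by
      rw [hps]
      field_simp
      ring
    have hQk : Q * ((c 0 - A) * (s hstar - η / 2 * (c 0 + A))) ≤ 0 :=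
      mul_nonpos_of_nonneg_of_nonpos hQpos.le hkey
    linarith
  -- combine in EReal
  have h1 : H (A • q)
      = ((η / 2 * ‖η⁻¹ • x - A • q‖ ^ 2 + (A * pstar - l pstar) : ℝ) : EReal) := by
    rw [hH, hlstarA, ← EReal.coe_add]
  have h2 : ((η / 2 * ‖η⁻¹ • x - c 0 • q‖ ^ 2 + (c 0 * pstar - l pstar) : ℝ) : EReal)
      ≤ H (c 0 • q) := by
    rw [hH, EReal.coe_add]
    exact add_le_add_right hlstarG _
  have hG0 : G 0 = c 0 • q := hG 0
  rw [hG0, h1]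
  exact le_trans (EReal.coe_le_coe_iff.2 hreal) h2
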